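/- Let g_k, g : ℝ^d → ℝ^D be realizations of two-layer bias-free ReLU networks and suppose the first-layer matrix A^Θ ∈ ℝ^{m×d} of a parametrization Θ of g has full row rank m with all output columns nonzero. Then the realization R(Θ) has exactly 2^m maximal open linear regions, given by the preimages H^s = {x : sign pattern of A^Θx equals s} for s ∈ {0,1}^m, on each of which DR(Θ) = C^Θ diag(s) A^Θ, and these 2^m derivative matrices are pairwise distinct. -/

import Mathlib

open Matrix in
/-- Surjectivity of `x ↦ A *ᵥ x` when the rows of `A` are linearly independent. -/
lemma aux_surj {d m : ℕ} (A : Fin m → Fin d → ℝ) (hA : LinearIndependent ℝ A)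
    (y : Fin m → ℝ) : ∃ x : Fin d → ℝ, ∀ i, ∑ l, A i l * x l = y i := by
  classical
  set M : Matrix (Fin m) (Fin d) ℝ := Matrix.of A with hM
  have hG : (M * Mᵀ).PosDef := by
    refine Matrix.PosDef.of_dotProduct_mulVec_pos (isHermitian_mul_conjTranspose_self M) fun x hx => ?_
    have hw : Mᵀ *ᵥ x ≠ 0 := by
      intro hw0
      have h0 : ∀ i, x i = 0 := Fintype.linearIndependent_iff.mp hA x (by
        funext l
        have := congrFun hw0 l
        simpa [hM, Matrix.mulVec, dotProduct, Matrix.of_apply, Finset.sum_apply, mul_comm] using this)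
      exact hx (funext h0)
    have key : star x ⬝ᵥ (M * Mᵀ) *ᵥ x = (Mᵀ *ᵥ x) ⬝ᵥ (Mᵀ *ᵥ x) := by
      rw [← Matrix.mulVec_mulVec, dotProduct_mulVec]
      simp [Matrix.vecMul_transpose, Matrix.mulVec_transpose]
    rw [key]
    rcases Function.ne_iff.mp hw with ⟨i, hi⟩
    have : 0 < ∑ i, (Mᵀ *ᵥ x) i * (Mᵀ *ᵥ x) i := by
      apply Finset.sum_pos' (fun i _ => mul_self_nonneg _)
      exact ⟨i, Finset.mem_univ i, mul_self_pos.mpr hi⟩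
    simpa [dotProduct] using this
  have hsurj : Function.Surjective (M * Mᵀ).mulVec :=
    Matrix.mulVec_surjective_iff_isUnit.mpr hG.isUnit
  obtain ⟨z, hz⟩ := hsurj y
  refine ⟨Mᵀ *ᵥ z, fun i => ?_⟩
  have : (M *ᵥ (Mᵀ *ᵥ z)) i = y i := by rw [Matrix.mulVec_mulVec, hz]
  simpa [Matrix.mulVec, dotProduct, hM] using this

/-- For a shallow bias-free ReLU network whose first-layer rows are linearly
independent (full row rank) and whose output columns are all nonzero, all
`2^m` sign regions `H^s` are nonempty open linear regions, on each of which
the derivative equals `C diag(s) A`, and these `2^m` derivative matrices are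
pairwise distinct. -/
theorem stmt_19 {d m D : ℕ}
    (A : Fin m → Fin d → ℝ) (C : Fin m → Fin D → ℝ)
    (hA : LinearIndependent ℝ A) (hC : ∀ i, C i ≠ 0) :
    (∀ s : Fin m → Bool,
      {x : Fin d → ℝ | ∀ i,
        if s i then 0 < ∑ l, A i l * x l else ∑ l, A i l * x l < 0}.Nonempty) ∧
    (∀ s : Fin m → Bool, ∀ x ∈ {x : Fin d → ℝ | ∀ i,
        if s i then 0 < ∑ l, A i l * x l else ∑ l, A i l * x l < 0},
      ∀ j : Fin D,
        DifferentiableAt ℝ (fun y => ∑ i, C i j * max (∑ l, A i l * y l) 0) x ∧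
        ∀ v : Fin d → ℝ,
          fderiv ℝ (fun y => ∑ i, C i j * max (∑ l, A i l * y l) 0) x v =
            ∑ i ∈ Finset.univ.filter (fun i => s i), C i j * ∑ l, A i l * v l) ∧
    ∀ s t : Fin m → Bool,
      (∀ (j : Fin D) (l : Fin d),
        ∑ i ∈ Finset.univ.filter (fun i => s i), C i j * A i l =
          ∑ i ∈ Finset.univ.filter (fun i => t i), C i j * A i l) → s = t := by
  classical
  refine ⟨?_, ?_, ?_⟩
  · -- nonemptiness
    intro s
    obtain ⟨x, hx⟩ := aux_surj A hA (fun i => if s i then 1 else -1)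
    refine ⟨x, fun i => ?_⟩
    by_cases h : s i <;> simp only [hx i, h, if_true, if_false] <;> norm_num
  · -- derivative on each region
    intro s x hx j
    set S : Set (Fin d → ℝ) := {x : Fin d → ℝ | ∀ i,
        if s i then 0 < ∑ l, A i l * x l else ∑ l, A i l * x l < 0} with hS
    have hopen : IsOpen S := by
      have : S = ⋂ i, {x : Fin d → ℝ |
          if s i then 0 < ∑ l, A i l * x l else ∑ l, A i l * x l < 0} := by
        ext y; simp [hS, Set.mem_iInter]
      rw [this]
      refine isOpen_iInter_of_finite fun i => ?_
      have hc : Continuous fun y : Fin d → ℝ => ∑ l, A i l * y l := by fun_prop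
      by_cases h : s i <;> simp only [h, if_true, if_false]
      · exact isOpen_lt continuous_const hc
      · exact isOpen_lt hc continuous_const
    -- the linear model
    let L : (Fin d → ℝ) →ₗ[ℝ] ℝ :=
      { toFun := fun v => ∑ i ∈ Finset.univ.filter (fun i => s i), C i j * ∑ l, A i l * v l
        map_add' := by
          intro y z
          rw [← Finset.sum_add_distrib]
          refine Finset.sum_congr rfl fun i _ => ?_
          simp [Pi.add_apply, mul_add, Finset.sum_add_distrib]
        map_smul' := by
          intro c y
          simp only [smul_eq_mul, RingHom.id_apply]
          rw [Finset.mul_sum]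
          refine Finset.sum_congr rfl fun i _ => ?_
          have hsum : ∑ l, A i l * (c • y) l = c * ∑ l, A i l * y l := by
            rw [Finset.mul_sum]
            exact Finset.sum_congr rfl fun l _ => by simp [smul_eq_mul, mul_left_comm]
          simp only [hsum, smul_eq_mul, RingHom.id_apply]
          ring }
    let Lc : (Fin d → ℝ) →L[ℝ] ℝ := LinearMap.toContinuousLinearMap L
    have hLc : HasFDerivAt (fun v => ∑ i ∈ Finset.univ.filter (fun i => s i),
        C i j * ∑ l, A i l * v l) Lc x := Lc.hasFDerivAt
    have heq : (fun y => ∑ i, C i j * max (∑ l, A i l * y l) 0) =ᶠ[nhds x]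
        (fun v => ∑ i ∈ Finset.univ.filter (fun i => s i), C i j * ∑ l, A i l * v l) := by
      filter_upwards [hopen.mem_nhds hx] with y hy
      rw [Finset.sum_filter]
      refine Finset.sum_congr rfl fun i _ => ?_
      have hyi := hy i
      by_cases h : s i <;> simp only [h, if_true, if_false] at hyi
      · simp [h, max_eq_left hyi.le]
      · simp [h, max_eq_right hyi.le]
    have hf : HasFDerivAt (fun y => ∑ i, C i j * max (∑ l, A i l * y l) 0) Lc x :=
      hLc.congr_of_eventuallyEq heq
    exact ⟨hf.differentiableAt, fun v => by rw [hf.fderiv]; rfl⟩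
  · -- distinctness
    intro s t h
    funext i
    by_contra hne
    have key : ∀ j : Fin D, ((if s i then (1:ℝ) else 0) - if t i then 1 else 0) * C i j = 0 := by
      intro j
      have := Fintype.linearIndependent_iff.mp hA
        (fun i => ((if s i then (1:ℝ) else 0) - if t i then 1 else 0) * C i j) ?_ i
      · exact this
      · funext l
        have hj := h j l
        rw [Finset.sum_filter, Finset.sum_filter] at hj
        simp only [Finset.sum_apply, Pi.smul_apply, smul_eq_mul, Pi.zero_apply]
        have : ∑ x : Fin m, ((if s x then (1:ℝ) else 0) - if t x then 1 else 0) * C x j * A x l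
            = (∑ x : Fin m, if s x then C x j * A x l else 0)
              - ∑ x : Fin m, if t x then C x j * A x l else 0 := by
          rw [← Finset.sum_sub_distrib]
          refine Finset.sum_congr rfl fun x _ => ?_
          by_cases hs : s x <;> by_cases ht : t x <;> simp [hs, ht]
        rw [this, hj, sub_self]
    have hfac : ((if s i then (1:ℝ) else 0) - if t i then 1 else 0) ≠ 0 := by
      by_cases hs : s i <;> by_cases ht : t i <;> simp_all
    exact hC i (funext fun j => by
      have := key j
      rcases mul_eq_zero.mp this with h' | h'
      · exact absurd h' hfac
      · simpa using h')
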